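/- If a vertex of the tree is 'eventually unsupported' in the sequence of weight functions obtained by iterated renormalization (i.e. at some stage all its descendants at some depth have weight zero), then the sequence of its weights converges to 0. -/
import Mathlib


/-- An abstract rooted tree: every vertex has a parent (the root is its own
parent), a depth (distance to the root), every vertex is connected to the
root, and each depth level is finite (finitely-branching). -/
structure RTree (V : Type) where
  root : V
  parent : V → V
  depth : V → ℕ
  parent_root : parent root = root
  depth_root : depth root = 0
  depth_parent : ∀ v : V, v ≠ root → depth (parent v) + 1 = depth v
  ancestor_root : ∀ v : V, parent^[depth v] v = root
  level_finite : ∀ d : ℕ, {v : V | depth v = d}.Finite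

namespace RTree

variable {V : Type}

/-- The children of a vertex. -/
def children (T : RTree V) (v : V) : Set V :=
  {u : V | T.parent u = v ∧ u ≠ T.root}

/-- The descendants of `v` that lie `e` levels below `v`. -/
def descAt (T : RTree V) (e : ℕ) (v : V) : Set V :=
  {u : V | T.parent^[e] u = v ∧ T.depth u = T.depth v + e}

end RTree

/-- A coherent weight function (a Hintikka tree): the root gets weight 1 and
the weight of each vertex is the sum of the weights of its children. -/
def Coherent {V : Type} (T : RTree V) (h : V → ℝ) : Prop :=
  h T.root = 1 ∧ ∀ v : V, h v = ∑ᶠ u ∈ T.children v, h u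


namespace RTree
variable {V : Type}

lemma descAt_finite (T : RTree V) (e : ℕ) (v : V) : (T.descAt e v).Finite :=
  (T.level_finite (T.depth v + e)).subset fun u hu => hu.2

lemma children_finite (T : RTree V) (v : V) : (T.children v).Finite := by
  by_cases hv : ∀ u ∈ T.children v, T.depth u = T.depth v + 1
  · exact (T.level_finite (T.depth v + 1)).subset hv
  · push_neg at hv
    obtain ⟨u, hu, hd⟩ := hv
    exact absurd (by rw [← T.depth_parent u hu.2, hu.1]) hd

lemma descAt_succ (T : RTree V) (e : ℕ) (v : V) :
    T.descAt (e + 1) v = ⋃ u ∈ T.descAt e v, T.children u := by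
  ext w
  simp only [Set.mem_iUnion, exists_prop]
  constructor
  · rintro ⟨hp, hd⟩
    have hwr : w ≠ T.root := by
      intro h; rw [h, T.depth_root] at hd; omega
    have hdp : T.depth (T.parent w) + 1 = T.depth w := T.depth_parent w hwr
    refine ⟨T.parent w, ⟨?_, by omega⟩, rfl, hwr⟩
    rw [← Function.iterate_succ_apply]; exact hp
  · rintro ⟨u, ⟨hp, hd⟩, hpw, hwr⟩
    refine ⟨?_, ?_⟩
    · rw [Function.iterate_succ_apply, hpw]; exact hp
    · rw [← T.depth_parent w hwr, hpw, hd]; omega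

end RTree

lemma coherent_desc {V : Type} (T : RTree V) (h : V → ℝ) (hc : Coherent T h) (v : V) :
    ∀ e : ℕ, h v = ∑ᶠ u ∈ T.descAt e v, h u := by
  intro e
  induction e with
  | zero =>
    have : T.descAt 0 v = {v} := by
      ext u
      constructor
      · rintro ⟨h1, -⟩; simpa using h1
      · rintro rfl; exact ⟨rfl, rfl⟩
    rw [this, finsum_mem_singleton]
  | succ e ih =>
    rw [T.descAt_succ e v, finsum_mem_biUnion ?_ (T.descAt_finite e v)
      (fun u _ => T.children_finite u)]
    · rw [ih]; exact finsum_mem_congr rfl fun u _ => hc.2 u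
    · intro a ha b hb hab
      simp only [Function.onFun, Set.disjoint_left]
      rintro w ⟨rfl, -⟩ ⟨rfl, -⟩
      exact hab rfl


/-- If a vertex is eventually unsupported in the sequence of weight functions
obtained by iterated renormalization (at some stage `E` all of its descendants
at some depth have weight zero), then the sequence of its weights converges
to 0.  (We use that renormalization never raises a zero weight to positive.) -/
theorem stmt7 {V : Type} (T : RTree V) (H : ℕ → V → ℝ)
    (hcoh : ∀ n : ℕ, Coherent T (H n)) (hnn : ∀ (n : ℕ) (v : V), 0 ≤ H n v)
    (hzero : ∀ (n : ℕ) (v : V), H n v = 0 → H (n + 1) v = 0)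
    (v : V) (E e : ℕ) (hev : ∀ u ∈ T.descAt e v, H E u = 0) :
    Filter.Tendsto (fun n : ℕ => H n v) Filter.atTop (nhds 0) := by
  have hE : H E v = 0 := by
    rw [coherent_desc T (H E) (hcoh E) v e]
    exact finsum_mem_of_eqOn_zero hev
  have hall : ∀ n, E ≤ n → H n v = 0 := by
    intro n hn
    induction n, hn using Nat.le_induction with
    | base => exact hE
    | succ n hn ih => exact hzero n v ih
  refine Filter.Tendsto.congr' ?_ tendsto_const_nhds
  filter_upwards [Filter.eventually_ge_atTop E] with n hn
  exact (hall n hn).symm
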